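/- For every real number c ≥ 0, the powers of the Grover matrix converge to a rotation by angle 2c: lim_{N→∞} G_N^{⌊c·√N⌋} = [[cos(2c), sin(2c)], [−sin(2c), cos(2c)]], the limit taken entrywise. (This is the rotation interpretation SG^{c√N} ≐ cos(c) + sin(c)·axis used in the paper: c√N Grover iterations implement a rotation by 2c in the plane spanned by the solution and non-solution states.) -/

import Mathlib

open Matrix Real Filter

/-- The 2×2 Grover matrix. -/
noncomputable def GroverM (N : ℕ) : Matrix (Fin 2) (Fin 2) ℝ :=
  !![1 - 2 / (N : ℝ), 2 * Real.sqrt ((N : ℝ) - 1) / (N : ℝ);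
     -(2 * Real.sqrt ((N : ℝ) - 1) / (N : ℝ)), 1 - 2 / (N : ℝ)]

/-- Rotation matrix by angle θ. -/
noncomputable def Rot (θ : ℝ) : Matrix (Fin 2) (Fin 2) ℝ :=
  !![Real.cos θ, Real.sin θ; -Real.sin θ, Real.cos θ]

lemma Rot_mul (a b : ℝ) : Rot a * Rot b = Rot (a + b) := by
  ext i j
  fin_cases i <;> fin_cases j <;>
    simp [Rot, Matrix.mul_apply, Fin.sum_univ_two, Real.cos_add, Real.sin_add] <;> ring

lemma Rot_pow (θ : ℝ) (k : ℕ) : Rot θ ^ k = Rot (k * θ) := by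
  induction k with
  | zero => ext i j; fin_cases i <;> fin_cases j <;> simp [Rot]
  | succ n ih =>
      rw [pow_succ, ih, Rot_mul]
      congr 1
      push_cast; ring

lemma Rot_continuous : Continuous Rot := by
  unfold Rot
  apply continuous_pi; intro i; apply continuous_pi; intro j
  fin_cases i <;> fin_cases j <;> simp <;> fun_prop

/-- The rotation angle of the Grover matrix. -/
noncomputable def θg (N : ℕ) : ℝ := Real.arccos (1 - 2 / (N : ℝ))

lemma sin_arccos_grover (N : ℕ) (hN : 2 ≤ N) :
    Real.sin (θg N) = 2 * Real.sqrt ((N : ℝ) - 1) / (N : ℝ) := by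
  have hN0 : (0 : ℝ) < N := by exact_mod_cast Nat.lt_of_lt_of_le (by norm_num) hN
  have hN1 : (1 : ℝ) ≤ N := by exact_mod_cast Nat.one_le_of_lt hN
  rw [θg, Real.sin_arccos]
  have h1 : (1 : ℝ) - (1 - 2 / N) ^ 2 = (2 * Real.sqrt ((N:ℝ) - 1) / N) ^ 2 := by
    have hs : Real.sqrt ((N:ℝ) - 1) ^ 2 = (N:ℝ) - 1 :=
      Real.sq_sqrt (by linarith)
    field_simp
    nlinarith [hs]
  rw [h1, Real.sqrt_sq (by positivity)]

lemma grover_eq (N : ℕ) (hN : 2 ≤ N) : GroverM N = Rot (θg N) := by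
  have hN0 : (0 : ℝ) < N := by exact_mod_cast Nat.lt_of_lt_of_le (by norm_num) hN
  have hcos : Real.cos (θg N) = 1 - 2 / (N : ℝ) := by
    apply Real.cos_arccos
    · have : 2 / (N : ℝ) ≤ 2 := by
        rw [div_le_iff₀ hN0]
        have : (2:ℝ) ≤ N := by exact_mod_cast hN
        nlinarith
      linarith
    · have : 0 < 2 / (N : ℝ) := by positivity
      linarith
  unfold GroverM Rot
  rw [hcos, sin_arccos_grover N hN]

lemma theta_tendsto : Tendsto θg atTop (nhds 0) := by
  have inv2N : Tendsto (fun N : ℕ => 1 - 2 / (N : ℝ)) atTop (nhds 1) := by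
    have : Tendsto (fun N : ℕ => 2 / (N : ℝ)) atTop (nhds 0) := by
      simpa [div_eq_mul_inv] using (tendsto_natCast_atTop_atTop (R := ℝ)).inv_tendsto_atTop.const_mul (2:ℝ)
    simpa using tendsto_const_nhds.sub this
  have h := (Real.continuous_arccos.tendsto 1).comp inv2N
  rw [Real.arccos_one] at h
  exact h

lemma theta_pos : ∀ᶠ N : ℕ in atTop, 0 < θg N := by
  filter_upwards [eventually_ge_atTop 2] with N hN
  have hN0 : (0 : ℝ) < N := by exact_mod_cast Nat.lt_of_lt_of_le (by norm_num) hN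
  rw [θg, Real.arccos_pos]
  have : 0 < 2 / (N : ℝ) := by positivity
  linarith

lemma sin_div_tendsto : Tendsto (fun N : ℕ => Real.sin (θg N) / θg N) atTop (nhds 1) := by
  have hslope : Tendsto (fun x : ℝ => Real.sin x / x) (nhdsWithin 0 {(0:ℝ)}ᶜ) (nhds 1) := by
    have h := (Real.hasDerivAt_sin 0)
    rw [hasDerivAt_iff_tendsto_slope] at h
    simp only [Real.cos_zero] at h
    refine h.congr' ?_
    filter_upwards [self_mem_nhdsWithin] with x hx
    simp [slope, hx]
    ring
  have hθ : Tendsto θg atTop (nhdsWithin 0 {(0:ℝ)}ᶜ) := by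
    rw [tendsto_nhdsWithin_iff]
    exact ⟨theta_tendsto, theta_pos.mono fun N h => ne_of_gt h⟩
  exact hslope.comp hθ

lemma sqrt_sin_tendsto : Tendsto (fun N : ℕ => Real.sqrt N * Real.sin (θg N)) atTop (nhds 2) := by
  have h1 : Tendsto (fun N : ℕ => 2 * Real.sqrt (1 - 1 / (N : ℝ))) atTop (nhds 2) := by
    have hb : Tendsto (fun N : ℕ => 1 - 1 / (N : ℝ)) atTop (nhds 1) := by
      have : Tendsto (fun N : ℕ => 1 / (N : ℝ)) atTop (nhds 0) := by
        simpa [Pi.inv_def] using (tendsto_natCast_atTop_atTop (R := ℝ)).inv_tendsto_atTop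
      simpa using tendsto_const_nhds.sub this
    have := ((Real.continuous_sqrt.tendsto 1).comp hb).const_mul (2 : ℝ)
    simpa using this
  refine h1.congr' ?_
  filter_upwards [eventually_ge_atTop 2] with N hN
  have hN0 : (0 : ℝ) < N := by exact_mod_cast Nat.lt_of_lt_of_le (by norm_num) hN
  have hs0 : (0 : ℝ) < Real.sqrt N := Real.sqrt_pos.mpr hN0
  have hN1 : (1:ℝ) ≤ N := by exact_mod_cast Nat.one_le_of_lt hN
  have hself : Real.sqrt N * Real.sqrt N = (N : ℝ) := Real.mul_self_sqrt hN0.le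
  rw [sin_arccos_grover N hN]
  have h2 : (1 : ℝ) - 1 / N = ((N : ℝ) - 1) / N := by field_simp
  rw [h2, Real.sqrt_div (by linarith : (0:ℝ) ≤ (N:ℝ) - 1) _]
  field_simp
  linear_combination (-1) * Real.sqrt ((N:ℝ) - 1) * hself

lemma sqrt_theta_tendsto : Tendsto (fun N : ℕ => Real.sqrt N * θg N) atTop (nhds 2) := by
  have hdiv := sqrt_sin_tendsto.div sin_div_tendsto (by norm_num)
  refine (by simpa [Pi.div_def] using hdiv : Tendsto
      (fun N : ℕ => (Real.sqrt N * Real.sin (θg N)) / (Real.sin (θg N) / θg N))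
      atTop (nhds 2)).congr' ?_
  filter_upwards [eventually_ge_atTop 2, theta_pos] with N hN hθ
  have hN0 : (0 : ℝ) < N := by exact_mod_cast Nat.lt_of_lt_of_le (by norm_num) hN
  have hN1 : (1:ℝ) < N := by
    have : (2:ℝ) ≤ N := by exact_mod_cast hN
    linarith
  have hsin : 0 < Real.sin (θg N) := by
    rw [sin_arccos_grover N hN]
    have : (0:ℝ) < Real.sqrt ((N:ℝ) - 1) := Real.sqrt_pos.mpr (by linarith)
    positivity
  field_simp

lemma floor_div_tendsto (c : ℝ) (hc : 0 ≤ c) :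
    Tendsto (fun N : ℕ => (⌊c * Real.sqrt N⌋₊ : ℝ) / Real.sqrt N) atTop (nhds c) := by
  have hsqrtTop : Tendsto (fun N : ℕ => Real.sqrt N) atTop atTop := by
    have h := (tendsto_rpow_atTop (by norm_num : (0:ℝ) < 1/2)).comp
      (tendsto_natCast_atTop_atTop (R := ℝ))
    refine h.congr' ?_
    filter_upwards [eventually_ge_atTop 0] with N _
    simp [Function.comp, Real.rpow_natCast, Real.sqrt_eq_rpow]
  have hinv : Tendsto (fun N : ℕ => 1 / Real.sqrt N) atTop (nhds 0) := by
    simpa [Pi.inv_def] using hsqrtTop.inv_tendsto_atTop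
  have hlow : Tendsto (fun N : ℕ => c - 1 / Real.sqrt N) atTop (nhds c) := by
    simpa using tendsto_const_nhds.sub hinv
  refine tendsto_of_tendsto_of_tendsto_of_le_of_le' hlow tendsto_const_nhds ?_ ?_
  · filter_upwards [eventually_ge_atTop 1] with N hN
    have hs0 : (0 : ℝ) < Real.sqrt N := Real.sqrt_pos.mpr (by exact_mod_cast hN)
    have h := Nat.sub_one_lt_floor (c * Real.sqrt N)
    have heq : (c - 1 / Real.sqrt N) * Real.sqrt N = c * Real.sqrt N - 1 := by
      field_simp
    rw [le_div_iff₀ hs0, heq]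
    linarith
  · filter_upwards [eventually_ge_atTop 1] with N hN
    have hs0 : (0 : ℝ) < Real.sqrt N := Real.sqrt_pos.mpr (by exact_mod_cast hN)
    rw [div_le_iff₀ hs0]
    exact Nat.floor_le (by positivity)

theorem grover_power_tendsto_rotation (c : ℝ) (hc : 0 ≤ c) :
    Tendsto (fun N : ℕ => GroverM N ^ ⌊c * Real.sqrt N⌋₊) atTop
      (nhds !![Real.cos (2 * c), Real.sin (2 * c);
               -Real.sin (2 * c), Real.cos (2 * c)]) := by
  have key : Tendsto (fun N : ℕ => (⌊c * Real.sqrt N⌋₊ : ℝ) * θg N) atTop (nhds (2 * c)) := by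
    have hmul := (floor_div_tendsto c hc).mul sqrt_theta_tendsto
    refine (by simpa [mul_comm] using hmul : Tendsto
        (fun N : ℕ => (⌊c * Real.sqrt N⌋₊ : ℝ) / Real.sqrt N * (Real.sqrt N * θg N))
        atTop (nhds (2 * c))).congr' ?_
    filter_upwards [eventually_ge_atTop 1] with N hN
    have hs0 : (0 : ℝ) < Real.sqrt N := Real.sqrt_pos.mpr (by exact_mod_cast hN)
    field_simp
  have hR := (Rot_continuous.tendsto (2 * c)).comp key
  show Tendsto (fun N : ℕ => GroverM N ^ ⌊c * Real.sqrt N⌋₊) atTop (nhds (Rot (2 * c)))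
  refine hR.congr' ?_
  filter_upwards [eventually_ge_atTop 2] with N hN
  simp only [Function.comp]
  rw [grover_eq N hN, Rot_pow]
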